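/- Let f₁, f₂, g₁, g₂ ∈ L^∞. Then S_{f₁,g₁}S_{f₂,g₂} = S_{f₁f₂, g₁g₂} if and only if either (1) f₁ = g₁, or (2) f₂ ∈ H^∞ and conj(g₂) ∈ H^∞. -/

import Mathlib

noncomputable section

open MeasureTheory Complex ComplexConjugate InnerProductSpace ContinuousLinearMap

namespace GSIO

instance : Fact (0 < 2 * Real.pi) := ⟨by positivity⟩

/-- The circle, modeled as `ℝ / 2πℤ`. -/
abbrev Circ : Type := AddCircle (2 * Real.pi)

/-- Normalized Haar (arc-length) measure on the circle. -/
abbrev μC : Measure Circ := AddCircle.haarAddCircle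

/-- `L²` of the circle. -/
abbrev L2 : Type := Lp ℂ 2 μC

/-- `L^∞` of the circle. -/
abbrev Linf : Type := Lp ℂ ⊤ μC

/-- The Hardy space `H²`: those `L²` functions whose negative Fourier coefficients vanish. -/
def Hardy : Submodule ℂ L2 where
  carrier := {f : L2 | ∀ n : ℤ, n < 0 → fourierCoeff (f : Circ → ℂ) n = 0}
  zero_mem' := by
    intro n hn
    rw [← fourierBasis_repr]
    simp
  add_mem' := by
    intro a b ha hb n hn
    have ha' := ha n hn
    have hb' := hb n hn
    rw [← fourierBasis_repr] at ha' hb' ⊢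
    rw [map_add, lp.coeFn_add, Pi.add_apply, ha', hb', add_zero]
  smul_mem' := by
    intro c a ha n hn
    have ha' := ha n hn
    rw [← fourierBasis_repr] at ha' ⊢
    rw [_root_.map_smul, lp.coeFn_smul, Pi.smul_apply, ha', smul_zero]

theorem isClosed_Hardy : IsClosed (Hardy : Set L2) := by
  have h : (Hardy : Set L2) =
      ⋂ n : {m : ℤ // m < 0}, (fun f : L2 =>
        (innerSL ℂ (fourierBasis (T := 2 * Real.pi) n.1)) f) ⁻¹' {0} := by
    ext f
    simp only [Set.mem_iInter, Set.mem_preimage, Set.mem_singleton_iff, SetLike.mem_coe]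
    constructor
    · intro hf n
      have h1 := hf n.1 n.2
      rw [← fourierBasis_repr, fourierBasis.repr_apply_apply] at h1
      simpa using h1
    · intro hf n hn
      have h1 := hf ⟨n, hn⟩
      rw [← fourierBasis_repr, fourierBasis.repr_apply_apply]
      simpa using h1
  rw [h]
  exact isClosed_iInter fun n =>
    isClosed_singleton.preimage (innerSL ℂ _).continuous

instance : CompleteSpace Hardy := isClosed_Hardy.completeSpace_coe

/-- The Riesz projection `P₊`, i.e. the orthogonal projection of `L²` onto `H²`. -/
def Pp : L2 →L[ℂ] L2 := Hardy.subtypeL.comp (Hardy.orthogonalProjectionOnto)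

/-- `P₋ = I − P₊`. -/
def Pm : L2 →L[ℂ] L2 := ContinuousLinearMap.id ℂ L2 - Pp

/-- The pointwise product of an `L^∞` function with an `L²` function, as an `L²` function. -/
def mulFun (φ : Linf) (x : L2) : L2 :=
  ((Lp.memLp x).smul (r := 2) (Lp.memLp φ)).toLp ((φ : Circ → ℂ) • (x : Circ → ℂ))

theorem mulFun_add (φ : Linf) (x y : L2) : mulFun φ (x + y) = mulFun φ x + mulFun φ y := by
  rw [mulFun, mulFun, mulFun, ← MemLp.toLp_add]
  apply MemLp.toLp_congr
  filter_upwards [Lp.coeFn_add x y] with t ht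
  have ht' : ((x + y : L2) : Circ → ℂ) t = (x : Circ → ℂ) t + (y : Circ → ℂ) t := by
    simpa using ht
  simp only [Pi.mul_apply, Pi.smul_apply, Pi.add_apply, smul_eq_mul, ht']
  ring

theorem mulFun_smul (c : ℂ) (φ : Linf) (x : L2) : mulFun φ (c • x) = c • mulFun φ x := by
  rw [mulFun, mulFun, ← MemLp.toLp_const_smul]
  apply MemLp.toLp_congr
  filter_upwards [Lp.coeFn_smul c x] with t ht
  have ht' : ((c • x : L2) : Circ → ℂ) t = c * (x : Circ → ℂ) t := by
    simpa using ht
  simp only [Pi.mul_apply, Pi.smul_apply, smul_eq_mul, ht']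
  ring

theorem norm_mulFun_le (φ : Linf) (x : L2) : ‖mulFun φ x‖ ≤ ‖φ‖ * ‖x‖ := by
  rw [mulFun, Lp.norm_toLp]
  have h := eLpNorm_smul_le_eLpNorm_top_mul_eLpNorm (μ := μC) 2
    (Lp.aestronglyMeasurable x) (φ : Circ → ℂ)
  refine le_trans (ENNReal.toReal_mono ?_ h) ?_
  · exact ENNReal.mul_ne_top (Lp.eLpNorm_ne_top φ) (Lp.eLpNorm_ne_top x)
  · rw [ENNReal.toReal_mul, Lp.norm_def, Lp.norm_def]

/-- The multiplication operator `M_φ` on `L²`, for `φ ∈ L^∞`. -/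
def mul (φ : Linf) : L2 →L[ℂ] L2 :=
  LinearMap.mkContinuous
    { toFun := mulFun φ
      map_add' := mulFun_add φ
      map_smul' := fun c x => mulFun_smul c φ x }
    ‖φ‖ (fun x => norm_mulFun_le φ x)

/-- Pointwise product in `L^∞`. -/
def mulInf (φ ψ : Linf) : Linf :=
  ((Lp.memLp ψ).smul (r := ⊤) (Lp.memLp φ)).toLp ((φ : Circ → ℂ) • (ψ : Circ → ℂ))

/-- Complex conjugation on `L^∞`. -/
def conjInf (φ : Linf) : Linf :=
  (show MemLp (fun t => star ((φ : Circ → ℂ) t)) ⊤ μC from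
    ⟨continuous_star.comp_aestronglyMeasurable (Lp.aestronglyMeasurable φ), by
      rw [eLpNorm_congr_norm_ae (g := (φ : Circ → ℂ))
        (Filter.Eventually.of_forall fun t => norm_star _)]
      exact Lp.eLpNorm_lt_top φ⟩).toLp _

/-- Complex conjugation on `L²`. -/
def conjL2 (x : L2) : L2 :=
  (show MemLp (fun t => star ((x : Circ → ℂ) t)) 2 μC from
    ⟨continuous_star.comp_aestronglyMeasurable (Lp.aestronglyMeasurable x), by
      rw [eLpNorm_congr_norm_ae (g := (x : Circ → ℂ))
        (Filter.Eventually.of_forall fun t => norm_star _)]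
      exact Lp.eLpNorm_lt_top x⟩).toLp _

/-- The inclusion `L^∞ ⊆ L²` (the measure is finite). -/
def toL2 (φ : Linf) : L2 := ((Lp.memLp φ).mono_exponent le_top).toLp φ

/-- The constant function `c` as an element of `L^∞`. -/
def constInf (c : ℂ) : Linf := (memLp_const c).toLp (fun _ => c)

/-- An `L^∞` function is constant (a.e.). -/
def IsConst (φ : Linf) : Prop := ∃ c : ℂ, φ = constInf c

/-- `φ ∈ H^∞ = L^∞ ∩ H²`: the negative Fourier coefficients of `φ` vanish. -/
def MemHinf (φ : Linf) : Prop := ∀ n : ℤ, n < 0 → fourierCoeff (φ : Circ → ℂ) n = 0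

/-- The coordinate function `z` as an element of `L^∞`. -/
def zInf : Linf := fourierLp (T := 2 * Real.pi) ⊤ 1

/-- The function `z̄` as an element of `L^∞`. -/
def zbarInf : Linf := fourierLp (T := 2 * Real.pi) ⊤ (-1)

/-- The antiunitary operator `V : h ↦ z̄ ⬝ conj h` on `L²`. -/
def Vmap (x : L2) : L2 := mul zbarInf (conjL2 x)

/-- `φ₋ = P₋ φ` for `φ ∈ L^∞`, viewed inside `L²`. -/
def mI (φ : Linf) : L2 := Pm (toL2 φ)

/-- The rank-one operator `p ⊗ q : x ↦ ⟪x, q⟫ · p` (the inner product being conjugate-linear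
in `q`). -/
def rankOne {E : Type*} [NormedAddCommGroup E] [InnerProductSpace ℂ E] (p q : E) : E →L[ℂ] E :=
  (innerSL ℂ q).smulRight p

/-- The Hilbert space direct sum `L² ⊕ L²`. -/
abbrev L2sq : Type := WithLp 2 (L2 × L2)

/-- A pair of `L²` functions, viewed as a vector in `L² ⊕ L²`. -/
def pair (x y : L2) : L2sq := (WithLp.equiv 2 (L2 × L2)).symm (x, y)

/-- Notation for the pointwise product in `L^∞`. -/
scoped infixl:70 " ⊙ " => GSIO.mulInf

/-- The Toeplitz operator `T_φ = P₊ M_φ P₊` (viewed as acting on the corner `H²` of `L²`). -/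
def Toeplitz (φ : Linf) : L2 →L[ℂ] L2 := Pp ∘L mul φ ∘L Pp

/-- The Hankel operator `H_φ = P₋ M_φ P₊ : H² → (H²)^⊥` (as a corner operator on `L²`). -/
def Hankel (φ : Linf) : L2 →L[ℂ] L2 := Pm ∘L mul φ ∘L Pp

/-- The dual Toeplitz operator `T̃_φ = P₋ M_φ P₋` on `(H²)^⊥` (as a corner operator on `L²`). -/
def dualToeplitz (φ : Linf) : L2 →L[ℂ] L2 := Pm ∘L mul φ ∘L Pm

/-- The generalized Cauchy singular integral operator with symbol `[[f, u], [g, v]]`: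
`R x = P₊ f P₊ x + P₋ g P₊ x + P₊ u P₋ x + P₋ v P₋ x`. -/
def Rop (f u g v : Linf) : L2 →L[ℂ] L2 :=
  Pp ∘L mul f ∘L Pp + Pm ∘L mul g ∘L Pp + Pp ∘L mul u ∘L Pm + Pm ∘L mul v ∘L Pm

/-- The singular integral operator `S_{f,g} = M_f P₊ + M_g P₋` on `L²`. -/
def Sop (f g : Linf) : L2 →L[ℂ] L2 := mul f ∘L Pp + mul g ∘L Pm



/-- Negation `t ↦ -t` preserves the Haar measure of the circle. -/
theorem mp_neg : MeasurePreserving (fun t : Circ => -t) μC μC :=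
  Measure.measurePreserving_neg μC

/-- Composition with `t ↦ -t` on `L²`. -/
def reflL2 : L2 →L[ℂ] L2 :=
  (Lp.compMeasurePreservingₗᵢ ℂ (fun t : Circ => -t) mp_neg).toContinuousLinearMap

/-- Composition with `t ↦ -t` on `L^∞`: for `φ ∈ L^∞`, `φ̃(z) = φ(z̄)`. -/
def reflInf (φ : Linf) : Linf := Lp.compMeasurePreserving (fun t : Circ => -t) mp_neg φ

/-- `φ* (z) = conj (φ(z̄))`. -/
def starInf (φ : Linf) : Linf := conjInf (reflInf φ)

/-- The flip operator `J : (Jh)(z) = z̄ · h(z̄)` on `L²`. -/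
def Jop : L2 →L[ℂ] L2 := mul zbarInf ∘L reflL2

/-- The Hankel operator `𝕳_φ = P₊ M_φ J` on `H²` (as a corner operator on `L²`). -/
def HankelPlus (φ : Linf) : L2 →L[ℂ] L2 := Pp ∘L mul φ ∘L Jop ∘L Pp

/-- The adjoint `H*_φ` of the Hankel operator `H_φ`. -/
def HankelAdj (φ : Linf) : L2 →L[ℂ] L2 := ContinuousLinearMap.adjoint (Hankel φ)

/-- `θ ∈ L^∞` is an inner function: `θ ∈ H^∞` and `|θ| = 1` a.e. -/
def IsInner (θ : Linf) : Prop := MemHinf θ ∧ ∀ᵐ t ∂μC, ‖(θ : Circ → ℂ) t‖ = 1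

/-- The orthogonal projection of `L²` onto `K_θ^⊥ = θH² ⊕ z̄·conj(H²)`, namely
`P₋ + M_θ P₊ M_{conj θ}`. -/
def Qproj (θ : Linf) : L2 →L[ℂ] L2 := Pm + mul θ ∘L Pp ∘L mul (conjInf θ)

open scoped InnerProductSpace

/-- Fourier coefficient of an `L²` element. -/
def fc (x : L2) (n : ℤ) : ℂ := fourierCoeff (x : Circ → ℂ) n

theorem fc_eq_repr (x : L2) (n : ℤ) : fc x n = fourierBasis.repr x n :=
  (fourierBasis_repr x n).symm

theorem fourierCoeff_congr_ae {f g : Circ → ℂ} (h : f =ᵐ[μC] g) (n : ℤ) :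
    fourierCoeff f n = fourierCoeff g n :=
  integral_congr_ae (h.mono fun t ht => by dsimp only; rw [ht])

theorem fc_add (x y : L2) (n : ℤ) : fc (x + y) n = fc x n + fc y n := by
  rw [fc_eq_repr, fc_eq_repr, fc_eq_repr, map_add, lp.coeFn_add, Pi.add_apply]

theorem fc_sub (x y : L2) (n : ℤ) : fc (x - y) n = fc x n - fc y n := by
  rw [fc_eq_repr, fc_eq_repr, fc_eq_repr, map_sub, lp.coeFn_sub, Pi.sub_apply]

theorem fc_smul (c : ℂ) (x : L2) (n : ℤ) : fc (c • x) n = c * fc x n := by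
  rw [fc_eq_repr, fc_eq_repr, _root_.map_smul, lp.coeFn_smul, Pi.smul_apply, smul_eq_mul]

theorem fc_zero (n : ℤ) : fc (0 : L2) n = 0 := by
  rw [fc_eq_repr, map_zero]; rfl

theorem fc_ext {x y : L2} (h : ∀ n, fc x n = fc y n) : x = y := by
  apply fourierBasis.repr.injective
  apply lp.ext
  funext n
  have := h n
  rwa [fc_eq_repr, fc_eq_repr] at this

theorem fc_inner (x : L2) (n : ℤ) : fc x n = ⟪(fourierBasis n : L2), x⟫_ℂ := by
  rw [fc_eq_repr, fourierBasis.repr_apply_apply]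

theorem fc_basis (k m : ℤ) : fc (fourierBasis k : L2) m = if m = k then 1 else 0 := by
  rw [fc_eq_repr, fourierBasis.repr_self, lp.single_apply]
  split_ifs with h
  · subst h; exact Pi.single_eq_same _ _
  · exact Pi.single_eq_of_ne h _

theorem coeFn_mulop (φ : Linf) (x : L2) :
    (mul φ x : Circ → ℂ) =ᵐ[μC] fun t => (φ : Circ → ℂ) t * (x : Circ → ℂ) t := by
  filter_upwards [MemLp.coeFn_toLp (((Lp.memLp x).smul (r := 2) (Lp.memLp φ)))] with t ht
  exact ht

theorem coeFn_mulInf (φ ψ : Linf) :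
    ((φ ⊙ ψ : Linf) : Circ → ℂ) =ᵐ[μC] fun t => (φ : Circ → ℂ) t * (ψ : Circ → ℂ) t := by
  filter_upwards [MemLp.coeFn_toLp (((Lp.memLp ψ).smul (r := ⊤) (Lp.memLp φ)))] with t ht
  exact ht

theorem coeFn_conjInf (φ : Linf) :
    ((conjInf φ : Linf) : Circ → ℂ) =ᵐ[μC] fun t => conj ((φ : Circ → ℂ) t) :=
  MemLp.coeFn_toLp _

theorem mulop_mulop (φ ψ : Linf) (x : L2) : mul φ (mul ψ x) = mul (φ ⊙ ψ) x := by
  apply Lp.ext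
  filter_upwards [coeFn_mulop φ (mul ψ x), coeFn_mulop ψ x, coeFn_mulop (φ ⊙ ψ) x,
    coeFn_mulInf φ ψ] with t h1 h2 h3 h4
  rw [h1, h2, h3, h4, mul_assoc]

theorem mulInf_comm (φ ψ : Linf) : φ ⊙ ψ = ψ ⊙ φ := by
  apply Lp.ext
  filter_upwards [coeFn_mulInf φ ψ, coeFn_mulInf ψ φ] with t h1 h2
  rw [h1, h2, mul_comm]

theorem fourierCoeff_fourier_mul (ψ : Circ → ℂ) (j m : ℤ) :
    fourierCoeff (fun t => fourier j t * ψ t) m = fourierCoeff ψ (m - j) := by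
  show (∫ t : Circ, fourier (-m) t • (fourier j t * ψ t) ∂μC) = ∫ t : Circ, fourier (-(m-j)) t • ψ t ∂μC
  refine integral_congr_ae (Filter.Eventually.of_forall fun t => ?_)
  dsimp only
  rw [smul_eq_mul, smul_eq_mul, ← mul_assoc, ← fourier_add, show -m + j = -(m - j) by ring]

theorem coeFn_fourierBasis (k : ℤ) : ((fourierBasis k : L2) : Circ → ℂ) =ᵐ[μC] fourier k := by
  rw [coe_fourierBasis]
  exact coeFn_fourierLp 2 k

theorem fc_mul_basis (φ : Linf) (k n : ℤ) :
    fc (mul φ (fourierBasis k)) n = fourierCoeff (φ : Circ → ℂ) (n - k) := by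
  rw [fc, fourierCoeff_congr_ae (g := fun t => fourier k t * (φ : Circ → ℂ) t) ?_ n,
    fourierCoeff_fourier_mul]
  filter_upwards [coeFn_mulop φ (fourierBasis k), coeFn_fourierBasis k] with t h1 h2
  rw [h1, h2, mul_comm]

theorem fc_mul_fourierLp (j : ℤ) (x : L2) (n : ℤ) :
    fc (mul (fourierLp ⊤ j) x) n = fc x (n - j) := by
  rw [fc, fourierCoeff_congr_ae (g := fun t => fourier j t * (x : Circ → ℂ) t) ?_ n,
    fourierCoeff_fourier_mul]
  · rfl
  filter_upwards [coeFn_mulop (fourierLp ⊤ j) x, coeFn_fourierLp ⊤ j] with t h1 h2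
  rw [h1, h2]

theorem Pp_apply (x : L2) : Pp x = (Hardy.orthogonalProjectionOnto x : L2) := rfl

theorem fc_Pp_neg (x : L2) {n : ℤ} (hn : n < 0) : fc (Pp x) n = 0 := by
  rw [Pp_apply]
  exact (Hardy.orthogonalProjectionOnto x).2 n hn

theorem basis_mem_Hardy {k : ℤ} (hk : 0 ≤ k) : (fourierBasis k : L2) ∈ Hardy := by
  intro n hn
  have h := fc_basis k n
  rw [fc] at h
  rw [h, if_neg (by omega)]

theorem fc_Pp_nonneg (x : L2) {n : ℤ} (hn : 0 ≤ n) : fc (Pp x) n = fc x n := by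
  have hmem : x - Pp x ∈ Hardyᗮ := Submodule.sub_starProjection_mem_orthogonal (K := Hardy) x
  have h0 : fc (x - Pp x) n = 0 := by
    rw [fc_inner]
    exact (Submodule.mem_orthogonal _ _).1 hmem _ (basis_mem_Hardy hn)
  rw [fc_sub] at h0
  exact (sub_eq_zero.mp h0).symm

theorem fc_Pp (x : L2) (n : ℤ) : fc (Pp x) n = if n < 0 then 0 else fc x n := by
  split_ifs with h
  · exact fc_Pp_neg x h
  · exact fc_Pp_nonneg x (by omega)

theorem Pm_apply (x : L2) : Pm x = x - Pp x := rfl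

theorem fc_Pm (x : L2) (n : ℤ) : fc (Pm x) n = if n < 0 then fc x n else 0 := by
  rw [Pm_apply, fc_sub, fc_Pp]
  split_ifs <;> ring

theorem Pp_eq_self {x : L2} (h : ∀ n < 0, fc x n = 0) : Pp x = x := by
  apply fc_ext
  intro n
  rw [fc_Pp]
  split_ifs with hn
  · exact (h n hn).symm
  · rfl

theorem Pp_eq_zero {x : L2} (h : ∀ n, 0 ≤ n → fc x n = 0) : Pp x = 0 := by
  apply fc_ext
  intro n
  rw [fc_Pp, fc_zero]
  split_ifs with hn
  · rfl
  · exact h n (by omega)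

theorem hasSum_fc_mul (φ : Linf) (x : L2) (n : ℤ) :
    HasSum (fun k => fc x k * fourierCoeff (φ : Circ → ℂ) (n - k)) (fc (mul φ x) n) := by
  have h := fourierBasis.hasSum_repr x
  have h2 := ((innerSL ℂ (fourierBasis n : L2)).comp (mul φ)).hasSum h
  have h3 : ∀ k : ℤ, ((innerSL ℂ (fourierBasis n : L2)).comp (mul φ))
      (fourierBasis.repr x k • (fourierBasis k : L2))
      = fc x k * fourierCoeff (φ : Circ → ℂ) (n - k) := by
    intro k
    rw [ContinuousLinearMap.comp_apply, _root_.map_smul, innerSL_apply_apply, inner_smul_right,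
      ← fc_inner, fc_mul_basis, fc_eq_repr]
  rw [funext h3] at h2
  have h4 : ((innerSL ℂ (fourierBasis n : L2)).comp (mul φ)) x = fc (mul φ x) n := by
    rw [ContinuousLinearMap.comp_apply, innerSL_apply_apply, ← fc_inner]
  rwa [h4] at h2

theorem fourierCoeff_conj (f : Circ → ℂ) (n : ℤ) :
    fourierCoeff (fun t => conj (f t)) n = conj (fourierCoeff f (-n)) := by
  show (∫ t : Circ, fourier (-n) t • conj (f t) ∂μC)
      = conj (∫ t : Circ, fourier (-(-n)) t • f t ∂μC)
  rw [← integral_conj]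
  refine integral_congr_ae (Filter.Eventually.of_forall fun t => ?_)
  dsimp only
  rw [smul_eq_mul, smul_eq_mul, map_mul, neg_neg, ← fourier_neg]

theorem memHinf_conj_iff (φ : Linf) :
    MemHinf (conjInf φ) ↔ ∀ m : ℤ, 0 < m → fourierCoeff (φ : Circ → ℂ) m = 0 := by
  have key : ∀ n : ℤ, fourierCoeff ((conjInf φ : Linf) : Circ → ℂ) n
      = conj (fourierCoeff (φ : Circ → ℂ) (-n)) := by
    intro n
    rw [fourierCoeff_congr_ae (coeFn_conjInf φ) n, fourierCoeff_conj]
  constructor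
  · intro h m hm
    have h1 := h (-m) (by omega)
    rw [key, neg_neg] at h1
    exact star_eq_zero.mp h1
  · intro h n hn
    rw [key, h (-n) (by omega), map_zero]

theorem Linf_eq_of_mul_basis {φ ψ : Linf} (j : ℤ)
    (h : mul φ (fourierBasis j) = mul ψ (fourierBasis j)) : φ = ψ := by
  apply Lp.ext
  have hae : (mul φ (fourierBasis j) : Circ → ℂ) =ᵐ[μC] (mul ψ (fourierBasis j) : Circ → ℂ) := by
    rw [h]
  filter_upwards [coeFn_mulop φ (fourierBasis j), coeFn_mulop ψ (fourierBasis j),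
    coeFn_fourierBasis j, hae] with t h1 h2 h3 h4
  have h5 : (φ : Circ → ℂ) t * fourier j t = (ψ : Circ → ℂ) t * fourier j t := by
    rw [← h3, ← h1, ← h2, h4]
  have h6 : (fourier j t : ℂ) ≠ 0 := by
    rw [fourier_apply]; exact Circle.coe_ne_zero _
  exact mul_right_cancel₀ h6 h5

theorem Pp_basis_of_nonneg {k : ℤ} (hk : 0 ≤ k) : Pp (fourierBasis k : L2) = fourierBasis k :=
  Pp_eq_self fun n hn => by rw [fc_basis, if_neg (by omega)]

theorem Pm_basis_of_nonneg {k : ℤ} (hk : 0 ≤ k) : Pm (fourierBasis k : L2) = 0 := by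
  rw [Pm_apply, Pp_basis_of_nonneg hk, sub_self]

theorem Pp_basis_of_neg {k : ℤ} (hk : k < 0) : Pp (fourierBasis k : L2) = 0 :=
  Pp_eq_zero fun n hn => by rw [fc_basis, if_neg (by omega)]

theorem Pm_basis_of_neg {k : ℤ} (hk : k < 0) : Pm (fourierBasis k : L2) = fourierBasis k := by
  rw [Pm_apply, Pp_basis_of_neg hk, sub_zero]

theorem Sop_apply (f g : Linf) (x : L2) : Sop f g x = mul f (Pp x) + mul g (Pm x) := rfl

/-- From the composition identity, the `f`-side Hankel-type vectors are annihilated. -/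
theorem aux_Hu {f₁ f₂ g₁ g₂ : Linf}
    (hE : Sop f₁ g₁ ∘L Sop f₂ g₂ = Sop (f₁ ⊙ f₂) (g₁ ⊙ g₂)) {k : ℤ} (hk : 0 ≤ k) :
    mul f₁ (Pm (mul f₂ (fourierBasis k))) = mul g₁ (Pm (mul f₂ (fourierBasis k))) := by
  have h1 := DFunLike.congr_fun hE (fourierBasis k : L2)
  simp only [ContinuousLinearMap.comp_apply, Sop_apply, Pp_basis_of_nonneg hk,
    Pm_basis_of_nonneg hk, map_zero, add_zero, ← mulop_mulop] at h1
  have hPpy : Pp (mul f₂ (fourierBasis k : L2))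
      = mul f₂ (fourierBasis k : L2) - Pm (mul f₂ (fourierBasis k : L2)) := by
    rw [Pm_apply, sub_sub_cancel]
  rw [hPpy, map_sub] at h1
  have h3 : mul g₁ (Pm (mul f₂ (fourierBasis k : L2)))
      - mul f₁ (Pm (mul f₂ (fourierBasis k : L2))) = 0 := by
    have h2 : (mul f₁ (mul f₂ (fourierBasis k : L2))
        - mul f₁ (Pm (mul f₂ (fourierBasis k : L2)))
        + mul g₁ (Pm (mul f₂ (fourierBasis k : L2))))
        - mul f₁ (mul f₂ (fourierBasis k : L2)) = 0 := by rw [h1, sub_self]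
    rw [← h2]; abel
  exact (sub_eq_zero.mp h3).symm

/-- From the composition identity, the `g`-side Hankel-type vectors are annihilated. -/
theorem aux_Hv {f₁ f₂ g₁ g₂ : Linf}
    (hE : Sop f₁ g₁ ∘L Sop f₂ g₂ = Sop (f₁ ⊙ f₂) (g₁ ⊙ g₂)) {k : ℤ} (hk : k < 0) :
    mul f₁ (Pp (mul g₂ (fourierBasis k))) = mul g₁ (Pp (mul g₂ (fourierBasis k))) := by
  have h1 := DFunLike.congr_fun hE (fourierBasis k : L2)
  simp only [ContinuousLinearMap.comp_apply, Sop_apply, Pp_basis_of_neg hk,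
    Pm_basis_of_neg hk, map_zero, zero_add, ← mulop_mulop] at h1
  have hPmy : Pm (mul g₂ (fourierBasis k : L2))
      = mul g₂ (fourierBasis k : L2) - Pp (mul g₂ (fourierBasis k : L2)) := Pm_apply _
  rw [hPmy, map_sub] at h1
  have h3 : mul f₁ (Pp (mul g₂ (fourierBasis k : L2)))
      - mul g₁ (Pp (mul g₂ (fourierBasis k : L2))) = 0 := by
    have h2 : (mul f₁ (Pp (mul g₂ (fourierBasis k : L2)))
        + (mul g₁ (mul g₂ (fourierBasis k : L2))
        - mul g₁ (Pp (mul g₂ (fourierBasis k : L2)))))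
        - mul g₁ (mul g₂ (fourierBasis k : L2)) = 0 := by rw [h1, sub_self]
    rw [← h2]; abel
  exact sub_eq_zero.mp h3

theorem fc_u (f₂ : Linf) (k m : ℤ) :
    fc (Pm (mul f₂ (fourierBasis k))) m
      = if m < 0 then fourierCoeff (f₂ : Circ → ℂ) (m - k) else 0 := by
  rw [fc_Pm]
  split_ifs with h
  · rw [fc_mul_basis]
  · rfl

theorem fc_v (g₂ : Linf) (k m : ℤ) :
    fc (Pp (mul g₂ (fourierBasis k))) m
      = if m < 0 then 0 else fourierCoeff (g₂ : Circ → ℂ) (m - k) := by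
  rw [fc_Pp]
  split_ifs with h
  · rfl
  · rw [fc_mul_basis]

theorem shift_u (f₂ : Linf) (k : ℤ) :
    mul zInf (Pm (mul f₂ (fourierBasis k)))
      = Pm (mul f₂ (fourierBasis (k + 1)))
        + fourierCoeff (f₂ : Circ → ℂ) (-(k + 1)) • (fourierBasis 0 : L2) := by
  apply fc_ext
  intro n
  rw [show (zInf : Linf) = fourierLp ⊤ 1 from rfl, fc_mul_fourierLp, fc_add, fc_smul,
    fc_u, fc_u, fc_basis]
  rcases lt_trichotomy n 0 with h | h | h
  · rw [if_pos (by omega), if_pos h, if_neg (by omega), mul_zero, add_zero]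
    congr 1; ring
  · rw [if_pos (by omega), if_neg (by omega), if_pos h, mul_one, zero_add]
    congr 1; omega
  · rw [if_neg (by omega), if_neg (by omega), if_neg (by omega), mul_zero, add_zero]

theorem shift_v (g₂ : Linf) (k : ℤ) :
    mul zbarInf (Pp (mul g₂ (fourierBasis k)))
      = Pp (mul g₂ (fourierBasis (k - 1)))
        + fourierCoeff (g₂ : Circ → ℂ) (-k) • (fourierBasis (-1) : L2) := by
  apply fc_ext
  intro n
  rw [show (zbarInf : Linf) = fourierLp ⊤ (-1) from rfl, fc_mul_fourierLp, fc_add, fc_smul,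
    fc_v, fc_v, fc_basis]
  rcases lt_trichotomy n (-1) with h | h | h
  · rw [if_pos (by omega), if_pos (by omega), if_neg (by omega), mul_zero, add_zero]
  · rw [if_neg (by omega), if_pos (by omega), if_pos h, mul_one, zero_add]
    congr 1; omega
  · rw [if_neg (by omega), if_neg (by omega), if_neg (by omega), mul_zero, add_zero]
    congr 1; ring

/-- `S_{f₁,g₁}S_{f₂,g₂} = S_{f₁f₂,g₁g₂}` iff `f₁ = g₁` or
`f₂, ḡ₂ ∈ H^∞`. -/
theorem statement15 (f₁ f₂ g₁ g₂ : Linf) :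
    Sop f₁ g₁ ∘L Sop f₂ g₂ = Sop (f₁ ⊙ f₂) (g₁ ⊙ g₂) ↔
      f₁ = g₁ ∨ (MemHinf f₂ ∧ MemHinf (conjInf g₂)) := by
  constructor
  · intro hE
    by_cases hfg : f₁ = g₁
    · exact Or.inl hfg
    right
    have hne : ∀ (j : ℤ) (c : ℂ),
        c • mul f₁ (fourierBasis j : L2) = c • mul g₁ (fourierBasis j : L2) → c = 0 := by
      intro j c hc
      by_contra h0
      exact hfg (Linf_eq_of_mul_basis j (smul_right_injective L2 h0 hc))
    constructor
    · intro n hn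
      have hk0 : (0 : ℤ) ≤ -n - 1 := by omega
      have hk1 : (0 : ℤ) ≤ -n - 1 + 1 := by omega
      have h1 : mul f₁ (mul zInf (Pm (mul f₂ (fourierBasis (-n - 1)))))
          = mul g₁ (mul zInf (Pm (mul f₂ (fourierBasis (-n - 1))))) := by
        rw [mulop_mulop, mulop_mulop, mulInf_comm f₁ zInf, mulInf_comm g₁ zInf,
          ← mulop_mulop, ← mulop_mulop, aux_Hu hE hk0]
      rw [shift_u f₂ (-n - 1), map_add (mul f₁), map_add (mul g₁), aux_Hu hE hk1,
        _root_.map_smul, _root_.map_smul] at h1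
      have h3 := hne 0 _ (add_left_cancel h1)
      have h4 : -(-n - 1 + 1) = n := by ring
      rwa [h4] at h3
    · rw [memHinf_conj_iff]
      intro m hm
      have hk0 : (-m : ℤ) < 0 := by omega
      have hk1 : (-m : ℤ) - 1 < 0 := by omega
      have h1 : mul f₁ (mul zbarInf (Pp (mul g₂ (fourierBasis (-m)))))
          = mul g₁ (mul zbarInf (Pp (mul g₂ (fourierBasis (-m))))) := by
        rw [mulop_mulop, mulop_mulop, mulInf_comm f₁ zbarInf, mulInf_comm g₁ zbarInf,
          ← mulop_mulop, ← mulop_mulop, aux_Hv hE hk0]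
      rw [shift_v g₂ (-m), map_add, map_add, aux_Hv hE hk1,
        _root_.map_smul, _root_.map_smul] at h1
      have h3 := hne (-1) _ (add_left_cancel h1)
      rwa [neg_neg] at h3
  · rintro (rfl | ⟨hf₂, hg₂⟩)
    · refine ContinuousLinearMap.ext fun x => ?_
      rw [ContinuousLinearMap.comp_apply, Sop_apply, Sop_apply, Sop_apply,
        ← map_add (mul f₁) (Pp (mul f₂ (Pp x) + mul g₂ (Pm x)))
          (Pm (mul f₂ (Pp x) + mul g₂ (Pm x)))]
      have hid : Pp (mul f₂ (Pp x) + mul g₂ (Pm x)) + Pm (mul f₂ (Pp x) + mul g₂ (Pm x))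
          = mul f₂ (Pp x) + mul g₂ (Pm x) := by
        rw [Pm_apply (mul f₂ (Pp x) + mul g₂ (Pm x))]; abel
      rw [hid, map_add, mulop_mulop, mulop_mulop]
    · refine ContinuousLinearMap.ext fun x => ?_
      rw [ContinuousLinearMap.comp_apply, Sop_apply, Sop_apply, Sop_apply]
      have hy₁ : Pp (mul f₂ (Pp x)) = mul f₂ (Pp x) := by
        apply Pp_eq_self
        intro n hn
        have hs := hasSum_fc_mul f₂ (Pp x) n
        have hz : (fun k => fc (Pp x) k * fourierCoeff (f₂ : Circ → ℂ) (n - k))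
            = fun _ => (0 : ℂ) := by
          funext k
          rcases lt_or_ge k 0 with h | h
          · rw [fc_Pp_neg x h, zero_mul]
          · rw [hf₂ (n - k) (by omega), mul_zero]
        rw [hz] at hs
        exact hs.unique hasSum_zero
      have hg₂' := (memHinf_conj_iff g₂).1 hg₂
      have hy₂ : Pp (mul g₂ (Pm x)) = 0 := by
        apply Pp_eq_zero
        intro n hn
        have hs := hasSum_fc_mul g₂ (Pm x) n
        have hz : (fun k => fc (Pm x) k * fourierCoeff (g₂ : Circ → ℂ) (n - k))
            = fun _ => (0 : ℂ) := by
          funext k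
          rcases lt_or_ge k 0 with h | h
          · rw [hg₂' (n - k) (by omega), mul_zero]
          · rw [fc_Pm, if_neg (by omega), zero_mul]
        rw [hz] at hs
        exact hs.unique hasSum_zero
      have hPpw : Pp (mul f₂ (Pp x) + mul g₂ (Pm x)) = mul f₂ (Pp x) := by
        rw [map_add, hy₁, hy₂, add_zero]
      have hPmw : Pm (mul f₂ (Pp x) + mul g₂ (Pm x)) = mul g₂ (Pm x) := by
        rw [Pm_apply, hPpw, add_sub_cancel_left]
      rw [hPpw, hPmw, mulop_mulop, mulop_mulop]

end GSIO
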